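/- Let X be a finite graph and Y ⊆ X. The map α sending a pair (J, K), where J ∈ A(Y,X) and K ⊆ Y ∩ J°, to the subset J − K of X, is a bijection between {(J,K) : J ∈ A(Y,X), K ⊆ Y ∩ J°} and the power set of X. Its inverse sends H ⊆ X to (H ⊔ C, C), where C is the union of those connected components of X − H that are contained in Y. -/
import Mathlib


open Classical

variable {V : Type*} [Fintype V] [DecidableEq V]

/-- The interior `J°` of `J`: vertices of `J` all of whose neighbors lie in `J`. -/
noncomputable def interiorSet (G : SimpleGraph V) (J : Finset V) : Finset V :=
  J.filter fun i => ∀ j, G.Adj i j → j ∈ J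

/-- `J ∈ A(Y,X)`: no connected component of the induced graph on the complement of
`J` is contained in `Y`. -/
def memA (G : SimpleGraph V) (Y J : Finset V) : Prop :=
  ∀ C : (G.induce {v : V | v ∉ J}).ConnectedComponent, ¬ ∀ v ∈ C.supp, (↑v : V) ∈ Y

/-- The union `C` of all connected components of the complement of `H` that are
contained in `Y`. -/
noncomputable def compInY (G : SimpleGraph V) (Y H : Finset V) : Finset V :=
  Finset.univ.filter fun v =>
    ∃ h : v ∉ H,
      ∀ w ∈ ((G.induce {x : V | x ∉ H}).connectedComponentMk ⟨v, h⟩).supp,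
        (↑w : V) ∈ Y

set_option linter.unusedSectionVars false

lemma reach_transfer (G : SimpleGraph V) {S T : Set V} {v w : ↥S}
    (hr : (G.induce S).Reachable v w) (hv : (v : V) ∈ T)
    (hcl : ∀ a b : ↥S, (G.induce S).Adj a b → (a : V) ∈ T → (b : V) ∈ T) :
    ∃ hw : (w : V) ∈ T, (G.induce T).Reachable ⟨v, hv⟩ ⟨w, hw⟩ := by
  obtain ⟨p⟩ := hr
  induction p with
  | nil => exact ⟨hv, SimpleGraph.Reachable.refl _⟩
  | @cons a b c hab p ih =>
    have hb : (b : V) ∈ T := hcl a b hab hv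
    obtain ⟨hw, hr'⟩ := ih hb
    exact ⟨hw, ((show (G.induce T).Adj ⟨↑a, hv⟩ ⟨↑b, hb⟩ from hab).reachable).trans hr'⟩

lemma mem_compInY (G : SimpleGraph V) (Y H : Finset V) (v : V) :
    v ∈ compInY G Y H ↔ ∃ h : v ∉ H,
      ∀ w ∈ ((G.induce {x : V | x ∉ H}).connectedComponentMk ⟨v, h⟩).supp,
        (↑w : V) ∈ Y := by
  simp [compInY]

lemma compInY_congr (G : SimpleGraph V) (Y H : Finset V) {v w : V}
    (hv : v ∉ H) (hw : w ∉ H)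
    (hr : (G.induce {x : V | x ∉ H}).Reachable ⟨v, hv⟩ ⟨w, hw⟩) :
    v ∈ compInY G Y H ↔ w ∈ compInY G Y H := by
  rw [mem_compInY, mem_compInY]
  have hcc : (G.induce {x : V | x ∉ H}).connectedComponentMk ⟨v, hv⟩ =
      (G.induce {x : V | x ∉ H}).connectedComponentMk ⟨w, hw⟩ :=
    SimpleGraph.ConnectedComponent.sound hr
  constructor
  · rintro ⟨h, hy⟩
    exact ⟨hw, by rw [← hcc]; exact hy⟩
  · rintro ⟨h, hy⟩
    exact ⟨hv, by rw [hcc]; exact hy⟩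

-- Forward properties of the inverse map
lemma inv_props (G : SimpleGraph V) (Y H : Finset V) :
    memA G Y (H ∪ compInY G Y H) ∧
    compInY G Y H ⊆ Y ∩ interiorSet G (H ∪ compInY G Y H) ∧
    Disjoint H (compInY G Y H) := by
  set C := compInY G Y H with hC
  have hCnotH : ∀ v ∈ C, v ∉ H := by
    intro v hv
    rw [mem_compInY] at hv
    exact hv.1
  have hdisj : Disjoint H C := by
    rw [Finset.disjoint_left]
    intro a ha hac
    exact hCnotH a hac ha
  -- C ⊆ Y
  have hCY : ∀ v ∈ C, v ∈ Y := by
    intro v hv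
    rw [mem_compInY] at hv
    obtain ⟨h, hy⟩ := hv
    exact hy ⟨v, h⟩ rfl
  -- closure: C is a union of components of complement of H
  have hclosC : ∀ v ∈ C, ∀ j, G.Adj v j → j ∉ H → j ∈ C := by
    intro v hv j hadj hjH
    have hvH : v ∉ H := hCnotH v hv
    have : (G.induce {x : V | x ∉ H}).Reachable ⟨v, hvH⟩ ⟨j, hjH⟩ :=
      (show (G.induce {x : V | x ∉ H}).Adj ⟨v, hvH⟩ ⟨j, hjH⟩ from hadj).reachable
    exact (compInY_congr G Y H hvH hjH this).mp hv
  refine ⟨?_, ?_, hdisj⟩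
  · -- memA
    intro D hD
    obtain ⟨⟨v, hv⟩, rfl⟩ := D.exists_rep
    have hvH : v ∉ H := by
      intro h; exact hv (by simp [Finset.mem_union, h])
    have hvC : v ∉ C := by
      intro h; exact hv (by simp [Finset.mem_union]; right; exact h)
    rw [mem_compInY] at hvC
    push_neg at hvC
    obtain ⟨w, hwsupp, hwY⟩ := hvC hvH
    -- w is reachable from v in complement of H
    rw [SimpleGraph.ConnectedComponent.mem_supp_iff] at hwsupp
    have hr : (G.induce {x : V | x ∉ H}).Reachable ⟨v, hvH⟩ w :=
      (SimpleGraph.ConnectedComponent.eq.mp hwsupp.symm)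
    -- transfer to complement of H ∪ C
    have hcl : ∀ a b : ↥{x : V | x ∉ H}, (G.induce {x : V | x ∉ H}).Adj a b →
        (a : V) ∈ {x : V | x ∉ H ∪ C} → (b : V) ∈ {x : V | x ∉ H ∪ C} := by
      intro a b hab ha
      simp only [Set.mem_setOf_eq, Finset.mem_union, not_or] at ha ⊢
      refine ⟨b.2, fun hbC => ha.2 ?_⟩
      exact hclosC b hbC a (G.adj_symm hab) a.2
    obtain ⟨hwT, hr'⟩ := reach_transfer G hr hv hcl
    have hwsupp' : (⟨(w : V), hwT⟩ : ↥{x : V | x ∉ H ∪ C}) ∈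
        ((G.induce {x : V | x ∉ H ∪ C}).connectedComponentMk ⟨v, hv⟩).supp := by
      rw [SimpleGraph.ConnectedComponent.mem_supp_iff]
      exact (SimpleGraph.ConnectedComponent.sound hr').symm
    exact hwY (hD _ hwsupp')
  · -- C ⊆ Y ∩ interior
    intro v hv
    rw [Finset.mem_inter]
    refine ⟨hCY v hv, ?_⟩
    rw [interiorSet, Finset.mem_filter]
    refine ⟨Finset.mem_union_right _ hv, fun j hadj => ?_⟩
    by_contra hj
    rw [Finset.mem_union, not_or] at hj
    exact hj.2 (hclosC v hv j hadj hj.1)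

-- key: for (J,K) admissible, compInY of J \ K is K
lemma key (G : SimpleGraph V) (Y : Finset V) (J K : Finset V)
    (hJ : memA G Y J) (hK : K ⊆ Y ∩ interiorSet G J) :
    compInY G Y (J \ K) = K := by
  have hKJ : K ⊆ J := fun v hv => Finset.mem_of_mem_filter v (Finset.mem_inter.mp (hK hv)).2
  have hKint : ∀ v ∈ K, ∀ j, G.Adj v j → j ∈ J := by
    intro v hv
    have := (Finset.mem_inter.mp (hK hv)).2
    rw [interiorSet, Finset.mem_filter] at this
    exact this.2
  have hKY : ∀ v ∈ K, v ∈ Y := fun v hv => (Finset.mem_inter.mp (hK hv)).1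
  ext v
  constructor
  · -- v ∈ compInY (J\K) → v ∈ K
    intro hv
    rw [mem_compInY] at hv
    obtain ⟨hvH, hy⟩ := hv
    by_contra hvK
    have hvJ : v ∉ J := fun h => hvH (Finset.mem_sdiff.mpr ⟨h, hvK⟩)
    -- v's component in complement of J has a vertex outside Y
    have := hJ ((G.induce {x : V | x ∉ J}).connectedComponentMk ⟨v, hvJ⟩)
    push_neg at this
    obtain ⟨w, hwsupp, hwY⟩ := this
    rw [SimpleGraph.ConnectedComponent.mem_supp_iff] at hwsupp
    have hr : (G.induce {x : V | x ∉ J}).Reachable ⟨v, hvJ⟩ w :=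
      SimpleGraph.ConnectedComponent.eq.mp hwsupp.symm
    have hcl : ∀ a b : ↥{x : V | x ∉ J}, (G.induce {x : V | x ∉ J}).Adj a b →
        (a : V) ∈ {x : V | x ∉ J \ K} → (b : V) ∈ {x : V | x ∉ J \ K} := by
      intro a b _ _
      simp only [Set.mem_setOf_eq, Finset.mem_sdiff, not_and, not_not]
      intro hbJ; exact absurd hbJ b.2
    obtain ⟨hwT, hr'⟩ := reach_transfer G hr hvH hcl
    have : (w : V) ∈ Y := by
      refine hy ⟨(w : V), hwT⟩ ?_
      rw [SimpleGraph.ConnectedComponent.mem_supp_iff]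
      exact (SimpleGraph.ConnectedComponent.sound hr').symm
    exact hwY this
  · -- v ∈ K → v ∈ compInY (J\K)
    intro hvK
    have hvH : v ∉ J \ K := fun h => (Finset.mem_sdiff.mp h).2 hvK
    rw [mem_compInY]
    refine ⟨hvH, fun w hwsupp => ?_⟩
    rw [SimpleGraph.ConnectedComponent.mem_supp_iff] at hwsupp
    have hr : (G.induce {x : V | x ∉ J \ K}).Reachable ⟨v, hvH⟩ w :=
      SimpleGraph.ConnectedComponent.eq.mp hwsupp.symm
    -- closure under K
    have hcl : ∀ a b : ↥{x : V | x ∉ J \ K}, (G.induce {x : V | x ∉ J \ K}).Adj a b →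
        (a : V) ∈ {x : V | x ∈ K} → (b : V) ∈ {x : V | x ∈ K} := by
      intro a b hab ha
      simp only [Set.mem_setOf_eq] at ha ⊢
      have hbJ : (b : V) ∈ J := hKint _ ha _ hab
      have := b.2
      simp only [Set.mem_setOf_eq, Finset.mem_sdiff, not_and, not_not] at this
      exact this hbJ
    obtain ⟨hwK, _⟩ := reach_transfer G hr hvK hcl
    exact hKY _ hwK


/-- The map `(J, K) ↦ J − K`, for `J ∈ A(Y,X)` and `K ⊆ Y ∩ J°`, is a bijection
onto the power set of `V`; its inverse sends `H` to `(H ⊔ C, C)` where `C` is the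
union of the connected components of the complement of `H` contained in `Y`. -/
theorem stmt1 (G : SimpleGraph V) (Y : Finset V) :
    Set.BijOn (fun p : Finset V × Finset V => p.1 \ p.2)
      {p : Finset V × Finset V | memA G Y p.1 ∧ p.2 ⊆ Y ∩ interiorSet G p.1}
      Set.univ ∧
    ∀ H : Finset V,
      ((H ∪ compInY G Y H, compInY G Y H) ∈
        {p : Finset V × Finset V | memA G Y p.1 ∧ p.2 ⊆ Y ∩ interiorSet G p.1}) ∧
      Disjoint H (compInY G Y H) ∧
      (H ∪ compInY G Y H) \ compInY G Y H = H := by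
  have hinv := fun H => inv_props G Y H
  have hsd : ∀ H : Finset V, (H ∪ compInY G Y H) \ compInY G Y H = H := by
    intro H
    rw [Finset.union_sdiff_distrib, Finset.sdiff_self, Finset.union_empty,
      Finset.sdiff_eq_self_of_disjoint (hinv H).2.2]
  constructor
  · refine ⟨fun p _ => Set.mem_univ _, ?_, ?_⟩
    · -- injective
      rintro ⟨J₁, K₁⟩ ⟨h₁, hk₁⟩ ⟨J₂, K₂⟩ ⟨h₂, hk₂⟩ heq
      simp only at heq
      have e1 : compInY G Y (J₁ \ K₁) = K₁ := key G Y J₁ K₁ h₁ hk₁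
      have e2 : compInY G Y (J₂ \ K₂) = K₂ := key G Y J₂ K₂ h₂ hk₂
      have hK : K₁ = K₂ := by rw [← e1, ← e2, heq]
      have hKJ₁ : K₁ ⊆ J₁ := fun v hv =>
        Finset.mem_of_mem_filter v (Finset.mem_inter.mp (hk₁ hv)).2
      have hKJ₂ : K₂ ⊆ J₂ := fun v hv =>
        Finset.mem_of_mem_filter v (Finset.mem_inter.mp (hk₂ hv)).2
      have hJ : J₁ = J₂ := by
        rw [← Finset.sdiff_union_of_subset hKJ₁, ← Finset.sdiff_union_of_subset hKJ₂,
          heq, hK]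
      exact Prod.ext hJ hK
    · -- surjective
      intro H _
      refine ⟨(H ∪ compInY G Y H, compInY G Y H), ⟨(hinv H).1, (hinv H).2.1⟩, hsd H⟩
  · intro H
    exact ⟨⟨(hinv H).1, (hinv H).2.1⟩, (hinv H).2.2, hsd H⟩
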